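/- For every positive integer n, the sum over all permutations σ of {1,…,n} of the monomial x₁^{h_σ(1)} x₂^{h_σ(2)} ⋯ x_n^{h_σ(n)} — where h_σ(j) = 1 if j is the maximum element of its cycle in the cycle decomposition of σ and h_σ(j) = 0 otherwise — equals the polynomial (x₁ + n − 1)(x₂ + n − 2) ⋯ (x_{n−1} + 1) x_n. -/
import Mathlib

open scoped Classical

/-- `hExp σ j = 1` if `j` is the maximum element of its cycle in `σ`, and `0` otherwise. -/
noncomputable def hExp {n : ℕ} (σ : Equiv.Perm (Fin n)) (j : Fin n) : ℕ :=
  if ∀ k : ℕ, (σ ^ k) j ≤ j then 1 else 0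

open Equiv Equiv.Perm in
lemma orbit_mem {n : ℕ} (p : Fin (n + 1)) (e : Equiv.Perm (Fin n)) (j : Fin n) (k : ℕ) :
    (∃ m, (decomposeFin.symm (p, e) ^ k) j.succ = ((e ^ m) j).succ) ∨
      ((decomposeFin.symm (p, e) ^ k) j.succ = 0 ∧ ∃ m, p = ((e ^ m) j).succ) := by
  induction k with
  | zero => exact Or.inl ⟨0, by simp⟩
  | succ k ih =>
    set σ := decomposeFin.symm (p, e) with hσ
    rw [pow_succ', Equiv.Perm.mul_apply]
    rcases ih with ⟨m, hm⟩ | ⟨h0, m, hm⟩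
    · rw [hm, hσ, Equiv.Perm.decomposeFin_symm_apply_succ]
      by_cases hp : (e ((e ^ m) j)).succ = p
      · right
        refine ⟨?_, m + 1, ?_⟩
        · rw [hp, Equiv.swap_apply_right]
        · rw [← hp, pow_succ', Equiv.Perm.mul_apply]
      · left
        refine ⟨m + 1, ?_⟩
        rw [Equiv.swap_apply_of_ne_of_ne (Fin.succ_ne_zero _) hp, pow_succ',
          Equiv.Perm.mul_apply]
    · rw [h0, hσ, Equiv.Perm.decomposeFin_symm_apply_zero, hm]
      exact Or.inl ⟨m, rfl⟩

open Equiv Equiv.Perm in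
lemma orbit_surj {n : ℕ} (p : Fin (n + 1)) (e : Equiv.Perm (Fin n)) (j : Fin n) (m : ℕ) :
    ∃ k, (decomposeFin.symm (p, e) ^ k) j.succ = ((e ^ m) j).succ := by
  induction m with
  | zero => exact ⟨0, by simp⟩
  | succ m ih =>
    obtain ⟨k, hk⟩ := ih
    set σ := decomposeFin.symm (p, e) with hσ
    have hstep : (σ ^ (k + 1)) j.succ = Equiv.swap 0 p ((e ^ (m + 1)) j).succ := by
      rw [pow_succ', Equiv.Perm.mul_apply, hk, hσ, Equiv.Perm.decomposeFin_symm_apply_succ]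
      rw [pow_succ', Equiv.Perm.mul_apply]
    by_cases hp : ((e ^ (m + 1)) j).succ = p
    · refine ⟨k + 2, ?_⟩
      have h1 : (σ ^ (k + 1)) j.succ = 0 := by rw [hstep, hp, Equiv.swap_apply_right]
      have h2 : (σ ^ (k + 2)) j.succ = σ ((σ ^ (k + 1)) j.succ) := by
        rw [← Equiv.Perm.mul_apply, ← pow_succ']
      rw [h2, h1, hσ, Equiv.Perm.decomposeFin_symm_apply_zero, hp]
    · exact ⟨k + 1, by rw [hstep, Equiv.swap_apply_of_ne_of_ne (Fin.succ_ne_zero _) hp]⟩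

open Equiv Equiv.Perm in
lemma hExp_succ {n : ℕ} (p : Fin (n + 1)) (e : Equiv.Perm (Fin n)) (j : Fin n) :
    hExp (decomposeFin.symm (p, e)) j.succ = hExp e j := by
  unfold hExp
  refine if_congr ⟨fun h m => ?_, fun h k => ?_⟩ rfl rfl
  · obtain ⟨k, hk⟩ := orbit_surj p e j m
    have := h k
    rw [hk, Fin.succ_le_succ_iff] at this
    exact this
  · rcases orbit_mem p e j k with ⟨m, hm⟩ | ⟨h0, _⟩
    · rw [hm, Fin.succ_le_succ_iff]; exact h m
    · rw [h0]; exact Fin.zero_le _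

open Equiv Equiv.Perm in
lemma hExp_zero {n : ℕ} (p : Fin (n + 1)) (e : Equiv.Perm (Fin n)) :
    hExp (decomposeFin.symm (p, e)) 0 = if p = 0 then 1 else 0 := by
  unfold hExp
  by_cases hp : p = 0
  · subst hp
    rw [if_pos, if_pos rfl]
    intro k
    have h0 : decomposeFin.symm ((0 : Fin (n+1)), e) 0 = 0 :=
      Equiv.Perm.decomposeFin_symm_apply_zero 0 e
    have : ∀ k, (decomposeFin.symm ((0 : Fin (n+1)), e) ^ k) 0 = 0 := by
      intro k
      induction k with
      | zero => rfl
      | succ k ih => rw [pow_succ', Equiv.Perm.mul_apply, ih, h0]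
    rw [this]
  · rw [if_neg, if_neg hp]
    push_neg
    refine ⟨1, ?_⟩
    simp only [pow_one, Equiv.Perm.decomposeFin_symm_apply_zero]
    exact Fin.pos_of_ne_zero hp

lemma key (n : ℕ) (x : Fin n → ℂ) :
    ∑ σ : Equiv.Perm (Fin n), ∏ j : Fin n, x j ^ hExp σ j
      = ∏ i : Fin n, (x i + ((n : ℂ) - 1 - ((i : ℕ) : ℂ))) := by
  induction n with
  | zero => simp
  | succ n ih =>
    rw [← Equiv.sum_comp Equiv.Perm.decomposeFin.symm
      (fun σ => ∏ j : Fin (n+1), x j ^ hExp σ j)]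
    rw [Fintype.sum_prod_type]
    have hterm : ∀ (p : Fin (n+1)) (e : Equiv.Perm (Fin n)),
        ∏ j : Fin (n+1), x j ^ hExp (Equiv.Perm.decomposeFin.symm (p, e)) j
          = (if p = 0 then x 0 else 1) * ∏ j : Fin n, x j.succ ^ hExp e j := by
      intro p e
      rw [Fin.prod_univ_succ, hExp_zero]
      congr 1
      · split <;> simp
      · exact Finset.prod_congr rfl fun j _ => by rw [hExp_succ]
    simp_rw [hterm]
    rw [← Finset.sum_mul_sum]
    have h1 : ∑ p : Fin (n+1), (if p = 0 then x 0 else (1:ℂ)) = x 0 + n := by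
      calc ∑ p : Fin (n+1), (if p = 0 then x 0 else (1:ℂ))
          = ∑ p : Fin (n+1), ((if p = 0 then x 0 - 1 else 0) + 1) :=
            Finset.sum_congr rfl (by intro p _; split <;> ring)
        _ = (x 0 - 1) + ((n : ℂ) + 1) := by
            rw [Finset.sum_add_distrib, Finset.sum_ite_eq' Finset.univ (0 : Fin (n+1))]
            simp
        _ = x 0 + n := by ring
    have h2 := ih (fun j => x j.succ)
    rw [h1, h2, Fin.prod_univ_succ]
    congr 1
    · simp
    · refine Finset.prod_congr rfl fun j _ => ?_
      simp only [Fin.val_succ]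
      push_cast
      ring

/-- The sum over all permutations of the cycle-maxima monomials equals the
`n`-th elementary shifted symmetric polynomial `(x₁+n−1)(x₂+n−2)⋯xₙ`. -/
theorem stmt0 (n : ℕ) (hn : 0 < n) (x : Fin n → ℂ) :
    ∑ σ : Equiv.Perm (Fin n), ∏ j : Fin n, x j ^ hExp σ j
      = ∏ i : Fin n, (x i + ((n : ℂ) - 1 - ((i : ℕ) : ℂ))) := by
  exact key n x
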